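/- Let B ⊂ ℝ^{d-1} be an open ball and f : B → ℝ a Λ-Lipschitz function. There exists a constant C > 0, depending only on B, Λ and d, such that for every h > 0 and every function v that is continuously differentiable on an open neighborhood of the closure of the set C_h = {(x̂, x_d) : x̂ ∈ B, |x_d − f(x̂)| < h} ⊂ ℝ^d, one has C·∫_{C_h} v² dx ≤ h²·∫_{C_h} |∇v|² dx + h·∫_{Γ_h} v² d𝓗^{d-1}, where Γ_h = {(x̂, f(x̂)+h) : x̂ ∈ B} is the upper (shifted-graph) boundary piece, 𝓗^{d-1} denotes the (d−1)-dimensional Hausdorff measure, and |∇v| is the Euclidean norm of the gradient. -/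

import Mathlib

set_option maxHeartbeats 1000000


open Metric Set MeasureTheory

noncomputable section

/-- `ℝ^n` with the Euclidean norm. -/
abbrev Euc (n : ℕ) := EuclideanSpace ℝ (Fin n)

/-- The space `ℝ^{d-1} × ℝ` equipped with the Euclidean (l²) product structure, so that
`‖gradient v p‖` is the Euclidean norm of the gradient of `v` at `p`, and Hausdorff
measures are taken with respect to the Euclidean metric. -/
abbrev Pt (d : ℕ) := WithLp 2 (Euc (d - 1) × ℝ)

instance (d : ℕ) : MeasurableSpace (Pt d) := borel _
instance (d : ℕ) : BorelSpace (Pt d) := ⟨rfl⟩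

/-- The point `(x, y) ∈ ℝ^{d-1} × ℝ`. -/
def toPt (d : ℕ) (x : Euc (d - 1)) (y : ℝ) : Pt d :=
  (WithLp.equiv 2 (Euc (d - 1) × ℝ)).symm (x, y)

/-- First (horizontal) component of a point of `ℝ^{d-1} × ℝ`. -/
def fstPt (d : ℕ) (p : Pt d) : Euc (d - 1) := (WithLp.equiv 2 (Euc (d - 1) × ℝ) p).1

/-- Second (vertical) component of a point of `ℝ^{d-1} × ℝ`. -/
def sndPt (d : ℕ) (p : Pt d) : ℝ := (WithLp.equiv 2 (Euc (d - 1) × ℝ) p).2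

/-- Lebesgue measure on `ℝ^d = ℝ^{d-1} × ℝ`, transported through the canonical
identification. -/
def lebPt (d : ℕ) : Measure (Pt d) :=
  Measure.map (WithLp.equiv 2 (Euc (d - 1) × ℝ)).symm volume

/-- The curved cylinder `C_h = {(x̂, x_d) : x̂ ∈ B, |x_d - f x̂| < h}` of half-height `h`
around the graph of `f` over the ball `B = B(x₀, ρ)`. -/
def curvedCyl (d : ℕ) (f : Euc (d - 1) → ℝ) (x₀ : Euc (d - 1)) (ρ h : ℝ) : Set (Pt d) :=
  { p | fstPt d p ∈ Metric.ball x₀ ρ ∧ |sndPt d p - f (fstPt d p)| < h }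

/-- The upper boundary graph `Γ_h = {(x̂, f x̂ + h) : x̂ ∈ B}`. -/
def upperGraph (d : ℕ) (f : Euc (d - 1) → ℝ) (x₀ : Euc (d - 1)) (ρ h : ℝ) : Set (Pt d) :=
  (fun x => toPt d x (f x + h)) '' Metric.ball x₀ ρ

variable (d : ℕ)

/-- the continuous linear equiv -/
def eL : Pt d ≃L[ℝ] (Euc (d-1) × ℝ) := WithLp.prodContinuousLinearEquiv 2 ℝ _ _

instance : FiniteDimensional ℝ (Pt d) := Module.Finite.equiv (eL d).toLinearEquiv.symm

/-- measurable equiv -/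
def eM : Pt d ≃ᵐ (Euc (d-1) × ℝ) := (eL d).toHomeomorph.toMeasurableEquiv

lemma lebPt_eq : lebPt d = Measure.map (eM d).symm volume := rfl

lemma eM_symm_eq (q : Euc (d-1) × ℝ) :
    (eM d).symm q = (WithLp.equiv 2 (Euc (d - 1) × ℝ)).symm q := rfl

lemma fstPt_eM (p : Pt d) : (eM d p).1 = fstPt d p := rfl
lemma sndPt_eM (p : Pt d) : (eM d p).2 = sndPt d p := rfl

lemma lipschitz_fstPt : LipschitzWith 1 (fstPt d) := by
  apply LipschitzWith.of_dist_le_mul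
  intro p q
  rw [NNReal.coe_one, one_mul]
  have h := WithLp.prod_dist_eq_of_L2 p q
  rw [h]
  have : dist (fstPt d p) (fstPt d q) = dist p.fst q.fst := rfl
  rw [this]
  have h2 : dist p.fst q.fst ^ 2 ≤ dist p.fst q.fst ^ 2 + dist p.snd q.snd ^ 2 := by
    nlinarith [sq_nonneg (dist p.snd q.snd)]
  have := Real.sqrt_le_sqrt h2
  rwa [Real.sqrt_sq dist_nonneg] at this

end

noncomputable section
open scoped ENNReal NNReal

lemma lipschitz_symm_of_anti {α β : Type*} [PseudoEMetricSpace α] [PseudoEMetricSpace β]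
    (e : α ≃ β) {K : ℝ≥0} (h : AntilipschitzWith K e) : LipschitzWith K e.symm := by
  intro a b
  have := h (e.symm a) (e.symm b)
  simpa using this

variable {n : ℕ}

lemma vol_le_hausdorff (hn : 1 ≤ n) : (volume : Measure (Euc n)) ≤ μH[(n:ℝ)] := by
  rw [Measure.le_iff]
  intro A hA
  have hφ := EuclideanSpace.volume_preserving_symm_measurableEquiv_toLp (Fin n)
  set φ := (MeasurableEquiv.toLp 2 (Fin n → ℝ)).symm
  have h1 : (volume : Measure (Euc n)) A = volume (φ.symm ⁻¹' A) := by
    rw [← hφ.measure_preimage (φ.symm.measurableSet_preimage.mpr hA).nullMeasurableSet]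
    congr 1
  have h2 : (volume : Measure (Fin n → ℝ)) (φ.symm ⁻¹' A)
      = μH[(n:ℝ)] (φ.symm ⁻¹' A) := by
    rw [← hausdorffMeasure_pi_real (ι := Fin n)]
    norm_num
  have h3 : μH[(n:ℝ)] (φ.symm ⁻¹' A) ≤ μH[(n:ℝ)] A := by
    have him : φ.symm ⁻¹' A = ⇑(WithLp.equiv 2 (Fin n → ℝ)) '' A := by
      ext x
      simp only [mem_preimage, mem_image]
      constructor
      · intro hx; exact ⟨φ.symm x, hx, rfl⟩
      · rintro ⟨a, ha, rfl⟩; exact ha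
    rw [him]
    have := (PiLp.lipschitzWith_ofLp 2 (fun _ : Fin n => ℝ)).hausdorffMeasure_image_le
      (by positivity : (0:ℝ) ≤ (n:ℝ)) A
    simpa using this
  rw [h1, h2]; exact h3

lemma hausdorff_lt_top_of_bounded (hn : 1 ≤ n) {A : Set (Euc n)}
    (hA : Bornology.IsBounded A) : μH[(n:ℝ)] A < ⊤ := by
  set φ := (MeasurableEquiv.toLp 2 (Fin n → ℝ)).symm
  set ψ : (Fin n → ℝ) ≃ (Euc n) := (WithLp.equiv 2 (Fin n → ℝ)).symm
  have hψ : LipschitzWith ((n:ℝ≥0) ^ (1/(2:ℝ))) ψ := by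
    have := PiLp.antilipschitzWith_ofLp 2 (fun _ : Fin n => ℝ)
    have h := lipschitz_symm_of_anti (WithLp.equiv 2 (Fin n → ℝ)) this
    simpa [ψ] using h
  have him : A = ψ '' (⇑(WithLp.equiv 2 (Fin n → ℝ)) '' A) := by
    ext x; simp [ψ]
  calc μH[(n:ℝ)] A = μH[(n:ℝ)] (ψ '' (⇑(WithLp.equiv 2 (Fin n → ℝ)) '' A)) := by rw [← him]
    _ ≤ ((n:ℝ≥0) ^ (1/(2:ℝ)) : ℝ≥0) ^ (n:ℝ) * μH[(n:ℝ)] (⇑(WithLp.equiv 2 (Fin n → ℝ)) '' A) :=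
        hψ.hausdorffMeasure_image_le (by positivity) _
    _ < ⊤ := by
        apply ENNReal.mul_lt_top
        · exact ENNReal.rpow_lt_top_of_nonneg (by positivity) (by simp)
        · rw [show μH[(n:ℝ)] = (μH[(Fintype.card (Fin n) : ℝ)] : Measure (Fin n → ℝ)) by norm_num,
            hausdorffMeasure_pi_real]
          have : Bornology.IsBounded (⇑(WithLp.equiv 2 (Fin n → ℝ)) '' A) :=
            (PiLp.lipschitzWith_ofLp 2 (fun _ : Fin n => ℝ)).isBounded_image hA
          exact this.measure_lt_top

end

noncomputable section
open scoped ENNReal NNReal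

variable (d : ℕ)

def gr (F : Euc (d-1) → ℝ) (h : ℝ) : Euc (d-1) → Pt d :=
  fun x => (eL d).symm (x, F x + h)

variable {Λ' : ℝ≥0} {F : Euc (d-1) → ℝ} {h : ℝ}

lemma gr_fst (x : Euc (d-1)) : fstPt d (gr d F h x) = x := rfl

lemma gr_lipschitz (hF : LipschitzWith Λ' F) : LipschitzWith (1 + Λ') (gr d F h) := by
  apply LipschitzWith.of_dist_le_mul
  intro x y
  have hdist : dist (gr d F h x) (gr d F h y)
      = Real.sqrt (dist x y ^ 2 + dist (F x + h) (F y + h) ^ 2) := by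
    have := WithLp.prod_dist_eq_of_L2 (gr d F h x) (gr d F h y)
    exact this
  rw [hdist]
  have h1 : dist (F x + h) (F y + h) = dist (F x) (F y) := by
    simp [Real.dist_eq]
  have h2 : dist (F x) (F y) ≤ Λ' * dist x y := hF.dist_le_mul x y
  have h3 : Real.sqrt (dist x y ^ 2 + dist (F x + h) (F y + h) ^ 2)
      ≤ Real.sqrt ((dist x y + Λ' * dist x y) ^ 2) := by
    apply Real.sqrt_le_sqrt
    rw [h1]
    nlinarith [dist_nonneg (x := x) (y := y), dist_nonneg (x := F x) (y := F y), h2]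
  calc _ ≤ Real.sqrt ((dist x y + Λ' * dist x y) ^ 2) := h3
    _ = dist x y + Λ' * dist x y := Real.sqrt_sq (by positivity)
    _ = (1 + Λ') * dist x y := by push_cast; ring

lemma gr_anti : AntilipschitzWith 1 (gr d F h) := by
  intro x y
  have := lipschitz_fstPt d (gr d F h x) (gr d F h y)
  simpa [gr_fst] using this

lemma gr_continuous (hF : LipschitzWith Λ' F) : Continuous (gr d F h) :=
  (gr_lipschitz d hF).continuous

lemma gr_emb (hF : LipschitzWith Λ' F) : MeasurableEmbedding (gr d F h) :=
  ((gr_anti d).isClosedEmbedding (gr_lipschitz d hF).uniformContinuous).measurableEmbedding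

lemma graph_measure_le (hd : 2 ≤ d) (hF : LipschitzWith Λ' F) (x₀ : Euc (d-1)) (ρ : ℝ) :
    ((μH[((d-1 : ℕ):ℝ)] : Measure (Euc (d-1))).restrict (ball x₀ ρ)).map (gr d F h) ≤
      (μH[((d-1 : ℕ):ℝ)] : Measure (Pt d)).restrict (gr d F h '' ball x₀ ρ) := by
  have hκ0 : (0:ℝ) ≤ ((d-1:ℕ):ℝ) := by positivity
  rw [Measure.le_iff]
  intro T hT
  rw [Measure.map_apply (gr_emb d hF).measurable hT, Measure.restrict_apply
    ((gr_emb d hF).measurable hT), Measure.restrict_apply hT]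
  set A : Set (Euc (d-1)) := gr d F h ⁻¹' T ∩ ball x₀ ρ with hA
  have him : A = fstPt d '' (gr d F h '' A) := by
    rw [Set.image_image]
    simp [gr_fst]
  calc μH[((d-1:ℕ):ℝ)] A = μH[((d-1:ℕ):ℝ)] (fstPt d '' (gr d F h '' A)) := by rw [← him]
    _ ≤ (1:ℝ≥0∞) ^ ((d-1:ℕ):ℝ) * μH[((d-1:ℕ):ℝ)] (gr d F h '' A) := by
        simpa using (lipschitz_fstPt d).hausdorffMeasure_image_le hκ0 (gr d F h '' A)
    _ = μH[((d-1:ℕ):ℝ)] (gr d F h '' A) := by simp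
    _ ≤ μH[((d-1:ℕ):ℝ)] (T ∩ gr d F h '' ball x₀ ρ) := by
        apply measure_mono
        rintro p ⟨a, ⟨haT, haB⟩, rfl⟩
        exact ⟨haT, ⟨a, haB, rfl⟩⟩

lemma partII (hd : 2 ≤ d) (x₀ : Euc (d-1)) (ρ : ℝ)
    (hF : LipschitzWith Λ' F) (v : Pt d → ℝ) (M : ℝ)
    (hvΓ : ContinuousOn v (gr d F h '' ball x₀ ρ))
    (hM : ∀ p ∈ gr d F h '' ball x₀ ρ, (v p)^2 ≤ M) :
    ∫ x in ball x₀ ρ, (v (gr d F h x))^2 ≤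
      ∫ p in gr d F h '' ball x₀ ρ, (v p)^2 ∂(μH[((d-1:ℕ):ℝ)]) := by
  have hn : 1 ≤ d - 1 := by omega
  set Γ := gr d F h '' ball x₀ ρ with hΓ
  have hΓmeas : MeasurableSet Γ :=
    (gr_emb d hF).measurableSet_image' measurableSet_ball
  have hκ0 : (0:ℝ) ≤ ((d-1:ℕ):ℝ) := by positivity
  have hgrcont : ContinuousOn (fun x => v (gr d F h x)) (ball x₀ ρ) :=
    hvΓ.comp (gr_continuous d hF).continuousOn (Set.mapsTo_image _ _)
  have hfin : ∫⁻ p in Γ, ENNReal.ofReal ((v p)^2) ∂(μH[((d-1:ℕ):ℝ)]) < ⊤ := by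
    calc ∫⁻ p in Γ, ENNReal.ofReal ((v p)^2) ∂(μH[((d-1:ℕ):ℝ)])
        ≤ ∫⁻ _ in Γ, ENNReal.ofReal M ∂(μH[((d-1:ℕ):ℝ)]) := by
          apply setLIntegral_mono' hΓmeas
          intro p hp
          exact ENNReal.ofReal_le_ofReal (hM p hp)
      _ = ENNReal.ofReal M * μH[((d-1:ℕ):ℝ)] Γ := by
          rw [setLIntegral_const]
      _ < ⊤ := by
          apply ENNReal.mul_lt_top ENNReal.ofReal_lt_top
          calc μH[((d-1:ℕ):ℝ)] Γ
              ≤ ((1 + Λ' : ℝ≥0) : ℝ≥0∞) ^ ((d-1:ℕ):ℝ) * μH[((d-1:ℕ):ℝ)] (ball x₀ ρ) :=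
                (gr_lipschitz d hF).hausdorffMeasure_image_le hκ0 _
            _ < ⊤ := ENNReal.mul_lt_top
                (ENNReal.rpow_lt_top_of_nonneg hκ0 (by simp))
                (hausdorff_lt_top_of_bounded hn isBounded_ball)
  have hL : ∫ x in ball x₀ ρ, (v (gr d F h x))^2
      = (∫⁻ x in ball x₀ ρ, ENNReal.ofReal ((v (gr d F h x))^2) ∂volume).toReal := by
    rw [integral_eq_lintegral_of_nonneg_ae]
    · exact Filter.Eventually.of_forall fun x => sq_nonneg _
    · exact (hgrcont.pow 2).aestronglyMeasurable measurableSet_ball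
  have hR : ∫ p in Γ, (v p)^2 ∂(μH[((d-1:ℕ):ℝ)])
      = (∫⁻ p in Γ, ENNReal.ofReal ((v p)^2) ∂(μH[((d-1:ℕ):ℝ)])).toReal := by
    rw [integral_eq_lintegral_of_nonneg_ae]
    · exact Filter.Eventually.of_forall fun x => sq_nonneg _
    · exact (hvΓ.pow 2).aestronglyMeasurable hΓmeas
  rw [hL, hR]
  apply ENNReal.toReal_mono hfin.ne
  calc ∫⁻ x in ball x₀ ρ, ENNReal.ofReal ((v (gr d F h x))^2) ∂volume
      ≤ ∫⁻ x in ball x₀ ρ, ENNReal.ofReal ((v (gr d F h x))^2) ∂(μH[((d-1:ℕ):ℝ)]) :=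
        lintegral_mono' (Measure.restrict_mono subset_rfl (vol_le_hausdorff hn)) le_rfl
    _ = ∫⁻ p, ENNReal.ofReal ((v p)^2)
          ∂(((μH[((d-1:ℕ):ℝ)] : Measure (Euc (d-1))).restrict (ball x₀ ρ)).map (gr d F h)) :=
        ((gr_emb d hF).lintegral_map (fun p => ENNReal.ofReal ((v p)^2))).symm
    _ ≤ ∫⁻ p in Γ, ENNReal.ofReal ((v p)^2) ∂(μH[((d-1:ℕ):ℝ)]) :=
        lintegral_mono' (graph_measure_le d hd hF x₀ ρ) le_rfl

end

noncomputable section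
open scoped ENNReal NNReal

variable {d : ℕ} {Λ' : ℝ≥0} {F : Euc (d-1) → ℝ} {h ρ : ℝ} {x₀ : Euc (d-1)}

/-- the base set in product coordinates -/
def Sset (F : Euc (d-1) → ℝ) (x₀ : Euc (d-1)) (ρ h : ℝ) : Set (Euc (d-1) × ℝ) :=
  { q | q.1 ∈ ball x₀ ρ ∧ |q.2 - F q.1| < h }

lemma curved_preimage : (eM d).symm ⁻¹' (curvedCyl d F x₀ ρ h) = Sset F x₀ ρ h := rfl

lemma curved_image : (eM d).symm '' (Sset F x₀ ρ h) = curvedCyl d F x₀ ρ h := by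
  rw [← curved_preimage, MeasurableEquiv.image_eq_preimage_symm]
  rfl

lemma Sset_open (hF : LipschitzWith Λ' F) : IsOpen (Sset F x₀ ρ h) := by
  have : Sset F x₀ ρ h =
      (fun q : Euc (d-1) × ℝ => q.1) ⁻¹' (ball x₀ ρ) ∩
      (fun q : Euc (d-1) × ℝ => |q.2 - F q.1|) ⁻¹' (Iio h) := rfl
  rw [this]
  exact (isOpen_ball.preimage continuous_fst).inter
    (isOpen_Iio.preimage ((continuous_snd.sub (hF.continuous.comp continuous_fst)).abs))

lemma curved_open (hF : LipschitzWith Λ' F) : IsOpen (curvedCyl d F x₀ ρ h) := by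
  have heq : curvedCyl d F x₀ ρ h = ⇑(eM d) ⁻¹' (Sset F x₀ ρ h) := rfl
  rw [heq]
  exact (Sset_open hF).preimage (eL d).toHomeomorph.continuous

lemma curved_bounded (hF : LipschitzWith Λ' F) :
    Bornology.IsBounded (curvedCyl d F x₀ ρ h) := by
  set R : Set (Euc (d-1) × ℝ) :=
    ball x₀ ρ ×ˢ Ioo (F x₀ - ((Λ':ℝ)*ρ+h)) (F x₀ + ((Λ':ℝ)*ρ+h)) with hR
  have hRsub : Sset F x₀ ρ h ⊆ R := by
    rintro ⟨y, t⟩ ⟨hy, htt⟩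
    have h1 : dist (F y) (F x₀) ≤ (Λ':ℝ) * dist y x₀ := hF.dist_le_mul y x₀
    have h2 : dist y x₀ ≤ ρ := le_of_lt (mem_ball.mp hy)
    have h3 : (Λ':ℝ) * dist y x₀ ≤ (Λ':ℝ) * ρ :=
      mul_le_mul_of_nonneg_left h2 Λ'.coe_nonneg
    rw [Real.dist_eq] at h1
    rw [abs_lt] at htt
    have h4 := abs_le.mp (h1.trans h3)
    exact ⟨hy, by
      constructor
      · linarith [h4.1, htt.1]
      · linarith [h4.2, htt.2]⟩
  have hRbdd : Bornology.IsBounded R := isBounded_ball.prod (isBounded_Ioo _ _)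
  have hanti := WithLp.prod_antilipschitzWith_ofLp 2 (Euc (d-1)) ℝ
  have hlip := lipschitz_symm_of_anti (WithLp.equiv 2 (Euc (d-1) × ℝ)) hanti
  have himg : Bornology.IsBounded ((⇑(eM d).symm) '' R) := hlip.isBounded_image hRbdd
  apply himg.subset
  rw [← curved_image (F := F) (x₀ := x₀) (ρ := ρ) (h := h)]
  exact image_mono hRsub

lemma closure_S_eq : eM d '' closure (curvedCyl d F x₀ ρ h) = closure (Sset F x₀ ρ h) := by
  rw [← curved_image (F := F) (x₀ := x₀) (ρ := ρ) (h := h)]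
  have h1 : (eM d) '' ((eM d).symm '' (Sset F x₀ ρ h)) = Sset F x₀ ρ h := by
    rw [Set.image_image]; simp
  have h2 : (⇑(eM d)) '' closure ((eM d).symm '' (Sset F x₀ ρ h))
      = closure ((⇑(eM d)) '' ((eM d).symm '' (Sset F x₀ ρ h))) :=
    (eL d).toHomeomorph.image_closure ((eM d).symm '' (Sset F x₀ ρ h))
  rw [h2, h1]

lemma fiber_closure (hh : 0 < h) {x : Euc (d-1)} (hx : x ∈ ball x₀ ρ)
    {t : ℝ} (ht : t ∈ Icc (F x - h) (F x + h)) :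
    (eM d).symm (x, t) ∈ closure (curvedCyl d F x₀ ρ h) := by
  have hsub : ({x} ×ˢ Ioo (F x - h) (F x + h) : Set (Euc (d-1) × ℝ)) ⊆ Sset F x₀ ρ h := by
    rintro ⟨y, s⟩ ⟨hy, hs⟩
    rcases hy with rfl
    exact ⟨hx, by rw [abs_lt]; exact ⟨by linarith [hs.1], by linarith [hs.2]⟩⟩
  have hclosure : (x, t) ∈ closure ({x} ×ˢ Ioo (F x - h) (F x + h) : Set (Euc (d-1) × ℝ)) := by
    rw [closure_prod_eq, closure_singleton, closure_Ioo (by linarith : F x - h ≠ F x + h)]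
    exact ⟨rfl, ht⟩
  have h2 : (x, t) ∈ closure (Sset F x₀ ρ h) := closure_mono hsub hclosure
  rw [← closure_S_eq] at h2
  obtain ⟨p, hp, hpe⟩ := h2
  have h3 : (eM d).symm (x, t) = p := by rw [← hpe]; simp
  rwa [h3]

end

noncomputable section
open scoped ENNReal NNReal


lemma oneD {g dg : ℝ → ℝ} {a b : ℝ} (hab : a < b)
    (hg : ∀ t ∈ Icc a b, HasDerivAt g (dg t) t)
    (hdg : ContinuousOn dg (Icc a b)) :
    ∫ t in Ioo a b, (g t)^2 ≤
      2*(b-a)*(g b)^2 + 4*(b-a)^2 * ∫ t in Ioo a b, (dg t)^2 := by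
  have hba : (0:ℝ) < b - a := by linarith
  set lam : ℝ := 2*(b-a) with hlam
  have hlam0 : 0 < lam := by positivity
  have hgc : ContinuousOn g (Icc a b) := fun t ht =>
    (hg t ht).continuousAt.continuousWithinAt
  have hg2 : IntegrableOn (fun t => (g t)^2) (Icc a b) volume :=
    ((hgc.pow 2).integrableOn_compact isCompact_Icc)
  have hdg2 : IntegrableOn (fun t => (dg t)^2) (Icc a b) volume :=
    ((hdg.pow 2).integrableOn_compact isCompact_Icc)
  set I : ℝ := ∫ t in Ioo a b, (g t)^2 with hI
  set K : ℝ := ∫ t in Ioo a b, (dg t)^2 with hK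
  have hKnn : 0 ≤ K := integral_nonneg fun t => sq_nonneg _
  -- the pointwise bound
  have key : ∀ t ∈ Icc a b, (g t)^2 ≤ (g b)^2 + lam⁻¹ * I + lam * K := by
    intro t ht
    have htb : t ≤ b := ht.2
    have hsub : Icc t b ⊆ Icc a b := Icc_subset_Icc ht.1 le_rfl
    have hcont2 : ContinuousOn (fun s => 2 * g s * dg s) (Icc a b) :=
      (continuousOn_const.mul hgc).mul hdg
    have ftc : ∫ s in t..b, (2 * g s * dg s) = (g b)^2 - (g t)^2 := by
      have := intervalIntegral.integral_eq_sub_of_hasDerivAt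
        (f := fun y => (g y)^2) (f' := fun s => 2 * g s * dg s) (a := t) (b := b)
        (fun s hs => by
          have hs' : s ∈ Icc a b := hsub (by rwa [uIcc_of_le htb] at hs)
          have := (hg s hs').fun_pow 2
          simpa [mul_comm, mul_assoc, mul_left_comm] using this)
        ((hcont2.mono (by rw [uIcc_of_le htb]; exact hsub)).intervalIntegrable)
      simpa using this
    have hIcc : IntervalIntegrable (fun s => 2 * g s * dg s) volume t b :=
      (hcont2.mono (by rw [uIcc_of_le htb]; exact hsub)).intervalIntegrable
    have hQ : ContinuousOn (fun s => lam⁻¹ * (g s)^2 + lam * (dg s)^2) (Icc a b) :=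
      (continuousOn_const.mul (hgc.pow 2)).add (continuousOn_const.mul (hdg.pow 2))
    have hQint : IntervalIntegrable (fun s => lam⁻¹ * (g s)^2 + lam * (dg s)^2) volume t b :=
      (hQ.mono (by rw [uIcc_of_le htb]; exact hsub)).intervalIntegrable
    have hQint' : IntervalIntegrable (fun s => lam⁻¹ * (g s)^2 + lam * (dg s)^2) volume a b :=
      (hQ.mono (by rw [uIcc_of_le (le_of_lt hab)])).intervalIntegrable
    have hneg : IntervalIntegrable (fun s => -(2 * g s * dg s)) volume t b := hIcc.neg
    have b1 : -(∫ s in t..b, (2 * g s * dg s)) ≤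
        ∫ s in t..b, (lam⁻¹ * (g s)^2 + lam * (dg s)^2) := by
      rw [← intervalIntegral.integral_neg]
      apply intervalIntegral.integral_mono_on htb hneg hQint
      intro s hs
      have h1 : 0 ≤ lam⁻¹ * (g s + lam * dg s)^2 := by positivity
      have : lam⁻¹ * (g s + lam * dg s)^2
          = lam⁻¹ * (g s)^2 + 2 * g s * dg s + lam * (dg s)^2 := by
        field_simp [ne_of_gt hlam0]; ring
      linarith [h1, this]
    have b2 : ∫ s in t..b, (lam⁻¹ * (g s)^2 + lam * (dg s)^2) ≤
        ∫ s in a..b, (lam⁻¹ * (g s)^2 + lam * (dg s)^2) := by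
      refine intervalIntegral.integral_mono_interval (c := a) (d := b) ht.1 htb le_rfl ?_ hQint'
      filter_upwards with s
      positivity
    have split : ∫ s in a..b, (lam⁻¹ * (g s)^2 + lam * (dg s)^2)
        = lam⁻¹ * I + lam * K := by
      rw [intervalIntegral.integral_of_le (le_of_lt hab)]
      rw [integral_Ioc_eq_integral_Ioo]
      rw [integral_add ((hg2.mono_set Ioo_subset_Icc_self).const_mul _)
        ((hdg2.mono_set Ioo_subset_Icc_self).const_mul _)]
      rw [integral_const_mul, integral_const_mul]
    linarith [ftc, b1, b2, split.ge, split.le]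
  have hIle : I ≤ (b - a) * ((g b)^2 + lam⁻¹ * I + lam * K) := by
    have := setIntegral_mono_on (hg2.mono_set Ioo_subset_Icc_self)
      (integrableOn_const measure_Ioo_lt_top.ne) measurableSet_Ioo
      (fun t ht => key t (Ioo_subset_Icc_self ht))
    rw [setIntegral_const] at this
    simpa [Real.volume_Ioo, ENNReal.toReal_ofReal (le_of_lt hba), smul_eq_mul, max_eq_left hba.le] using this
  have hhalf : (b - a) * lam⁻¹ = 1/2 := by
    rw [hlam]; field_simp
  have expand : (b - a) * ((g b)^2 + lam⁻¹ * I + lam * K)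
      = (b - a) * (g b)^2 + 1/2 * I + 2*(b-a)^2 * K := by
    rw [hlam]; field_simp
  nlinarith [hIle, expand, hKnn, hba]

lemma setIntegral_lebPt {d : ℕ} {F : Euc (d-1) → ℝ} {x₀ : Euc (d-1)} {ρ h : ℝ}
    (G : Pt d → ℝ) :
    ∫ p in curvedCyl d F x₀ ρ h, G p ∂(lebPt d)
      = ∫ q in Sset F x₀ ρ h, G ((eM d).symm q) := by
  rw [lebPt_eq, setIntegral_map_equiv, curved_preimage]

instance instCSPt (d : ℕ) : ContinuousSMul ℝ (Pt d) := inferInstance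

lemma partI (d : ℕ) (hd : 2 ≤ d) {x₀ : Euc (d-1)} {ρ h : ℝ} (hh : 0 < h) {Λ' : ℝ≥0}
    {F : Euc (d-1) → ℝ} (hF : LipschitzWith Λ' F) (v : Pt d → ℝ) (U : Set (Pt d))
    (hU : IsOpen U) (hclo : closure (curvedCyl d F x₀ ρ h) ⊆ U) (hv : ContDiffOn ℝ 1 v U) :
    ∫ p in curvedCyl d F x₀ ρ h, (v p)^2 ∂(lebPt d) ≤
      4*h*(∫ x in ball x₀ ρ, (v (gr d F h x))^2)
      + 16*h^2 * ∫ p in curvedCyl d F x₀ ρ h, ‖gradient v p‖^2 ∂(lebPt d) := by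
  set B := ball x₀ ρ with hB
  set C := curvedCyl d F x₀ ρ h with hC
  set S := Sset F x₀ ρ h with hS
  set u : Pt d := (eL d).symm (0, 1) with hudef
  -- basic continuity facts
  have hvcont : ContinuousOn v U := hv.continuousOn
  have hfdcont : ContinuousOn (fderiv ℝ v) U :=
    hv.continuousOn_fderiv_of_isOpen hU le_rfl
  have hgradnorm : ∀ p, ‖gradient v p‖ = ‖fderiv ℝ v p‖ := fun p =>
    (InnerProductSpace.toDual ℝ (Pt d)).symm.norm_map (fderiv ℝ v p)
  have hgrad2cont : ContinuousOn (fun p => ‖gradient v p‖^2) U := by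
    have : ContinuousOn (fun p => ‖(InnerProductSpace.toDual ℝ (Pt d)).symm
        (fderiv ℝ v p)‖^2) U :=
      (((InnerProductSpace.toDual ℝ (Pt d)).symm.continuous.comp_continuousOn
        hfdcont).norm).pow 2
    exact this
  have hu : ‖u‖ = 1 := by
    have h0 : ‖u‖ = Real.sqrt (‖(0 : Euc (d-1))‖^2 + ‖(1:ℝ)‖^2) :=
      WithLp.prod_norm_eq_of_L2 u
    rw [h0]; simp
  -- compactness
  have hSmeas : MeasurableSet S := (Sset_open hF).measurableSet
  have hCbdd : Bornology.IsBounded C := curved_bounded hF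
  have hcompC : IsCompact (closure C) := hCbdd.isCompact_closure
  have hcompS : IsCompact (closure S) := by
    rw [← closure_S_eq]
    exact hcompC.image (eL d).toHomeomorph.continuous
  have hSU : ∀ q ∈ closure S, (eM d).symm q ∈ U := by
    intro q hq
    rw [← closure_S_eq] at hq
    obtain ⟨p, hp, rfl⟩ := hq
    have : (eM d).symm (eM d p) = p := by simp
    rw [this]; exact hclo hp
  -- integrands on the product space
  set T : Euc (d-1) × ℝ → ℝ := S.indicator (fun q => (v ((eM d).symm q))^2) with hT
  set TG : Euc (d-1) × ℝ → ℝ :=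
    S.indicator (fun q => ‖gradient v ((eM d).symm q)‖^2) with hTG
  have hesymcont : Continuous (fun q : Euc (d-1) × ℝ => (eM d).symm q) :=
    (eL d).symm.toHomeomorph.continuous
  have hWcont : ContinuousOn (fun q => (v ((eM d).symm q))^2) (closure S) :=
    (hvcont.comp hesymcont.continuousOn hSU).pow 2
  have hWGcont : ContinuousOn (fun q => ‖gradient v ((eM d).symm q)‖^2) (closure S) :=
    hgrad2cont.comp hesymcont.continuousOn hSU
  have hTint : Integrable T volume := by
    rw [hT, integrable_indicator_iff hSmeas]
    exact (hWcont.integrableOn_compact hcompS).mono_set subset_closure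
  have hTGint : Integrable TG volume := by
    rw [hTG, integrable_indicator_iff hSmeas]
    exact (hWGcont.integrableOn_compact hcompS).mono_set subset_closure
  have hvol : (volume : Measure (Euc (d-1) × ℝ))
      = (volume : Measure (Euc (d-1))).prod volume := Measure.volume_eq_prod _ _
  have hTint' : Integrable T ((volume : Measure (Euc (d-1))).prod volume) := by
    rwa [hvol] at hTint
  have hTGint' : Integrable TG ((volume : Measure (Euc (d-1))).prod volume) := by
    rwa [hvol] at hTGint
  set A : Euc (d-1) → ℝ := fun x => ∫ t, T (x, t) with hA
  set AG : Euc (d-1) → ℝ := fun x => ∫ t, TG (x, t) with hAG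
  have hAint : Integrable A volume := hTint'.integral_prod_left
  have hAGint : Integrable AG volume := hTGint'.integral_prod_left
  -- fiber identifications
  have hmemS : ∀ (x : Euc (d-1)) (t : ℝ),
      ((x,t) ∈ S ↔ x ∈ B ∧ t ∈ Ioo (F x - h) (F x + h)) := by
    intro x t
    simp only [hS, Sset, mem_setOf_eq, mem_Ioo, abs_lt]
    constructor
    · rintro ⟨h1, h2, h3⟩; exact ⟨h1, by linarith, by linarith⟩
    · rintro ⟨h1, h2, h3⟩; exact ⟨h1, by linarith, by linarith⟩
  have hfibT : ∀ x ∈ B, A x = ∫ t in Ioo (F x - h) (F x + h), (v ((eM d).symm (x, t)))^2 := by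
    intro x hx
    have hfe : ∀ t, T (x, t)
        = (Ioo (F x - h) (F x + h)).indicator (fun t => (v ((eM d).symm (x, t)))^2) t := by
      intro t
      by_cases ht : t ∈ Ioo (F x - h) (F x + h)
      · rw [indicator_of_mem ht, hT, indicator_of_mem ((hmemS x t).mpr ⟨hx, ht⟩)]
      · rw [indicator_of_notMem ht, hT,
          indicator_of_notMem (fun hmem => ht ((hmemS x t).mp hmem).2)]
    show (∫ t, T (x, t)) = _
    simp only [hfe]
    rw [integral_indicator measurableSet_Ioo]
  have hfibTG : ∀ x ∈ B, AG x
      = ∫ t in Ioo (F x - h) (F x + h), ‖gradient v ((eM d).symm (x, t))‖^2 := by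
    intro x hx
    have hfe : ∀ t, TG (x, t)
        = (Ioo (F x - h) (F x + h)).indicator
            (fun t => ‖gradient v ((eM d).symm (x, t))‖^2) t := by
      intro t
      by_cases ht : t ∈ Ioo (F x - h) (F x + h)
      · rw [indicator_of_mem ht, hTG, indicator_of_mem ((hmemS x t).mpr ⟨hx, ht⟩)]
      · rw [indicator_of_notMem ht, hTG,
          indicator_of_notMem (fun hmem => ht ((hmemS x t).mp hmem).2)]
    show (∫ t, TG (x, t)) = _
    simp only [hfe]
    rw [integral_indicator measurableSet_Ioo]
  have hfibT0 : ∀ x, x ∉ B → A x = 0 := by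
    intro x hx
    have hfe : ∀ t, T (x, t) = 0 := fun t =>
      indicator_of_notMem (fun hmem => hx ((hmemS x t).mp hmem).1) _
    show (∫ t, T (x, t)) = 0
    simp only [hfe]
    exact integral_zero _ _
  have hfibTG0 : ∀ x, x ∉ B → AG x = 0 := by
    intro x hx
    have hfe : ∀ t, TG (x, t) = 0 := fun t =>
      indicator_of_notMem (fun hmem => hx ((hmemS x t).mp hmem).1) _
    show (∫ t, TG (x, t)) = 0
    simp only [hfe]
    exact integral_zero _ _
  -- the 1D estimate on each fiber
  have hfiber_bound : ∀ x ∈ B,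
      A x ≤ 4*h*(v (gr d F h x))^2 + 16*h^2 * AG x := by
    intro x hx
    set a := F x - h with ha
    set b := F x + h with hb
    have hab : a < b := by rw [ha, hb]; linarith
    set γ : ℝ → Pt d := fun t => (eM d).symm (x, t) with hγ
    have hγcont : Continuous γ := hesymcont.comp (continuous_const.prodMk continuous_id)
    have hγU : ∀ t ∈ Icc a b, γ t ∈ U := fun t ht => hclo (fiber_closure hh hx ht)
    have hcurve : ∀ t : ℝ, HasDerivAt γ u t := by
      intro t
      have h1 : HasDerivAt (fun s : ℝ => ((x, s) : Euc (d-1) × ℝ)) (0, 1) t :=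
        (hasDerivAt_const t x).prodMk (hasDerivAt_id t)
      have h2 := ((eL d).symm : (Euc (d-1) × ℝ) →L[ℝ] Pt d).hasFDerivAt.comp_hasDerivAt t h1
      exact h2
    set dg : ℝ → ℝ := fun t => (fderiv ℝ v (γ t)) u with hdg
    have hderiv : ∀ t ∈ Icc a b, HasDerivAt (fun t => v (γ t)) (dg t) t := by
      intro t ht
      have hdiff : DifferentiableAt ℝ v (γ t) :=
        (hv.differentiableOn one_ne_zero).differentiableAt (hU.mem_nhds (hγU t ht))
      exact hdiff.hasFDerivAt.comp_hasDerivAt t (hcurve t)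
    have hdgcont : ContinuousOn dg (Icc a b) :=
      (hfdcont.comp hγcont.continuousOn hγU).clm_apply continuousOn_const
    have h1d := oneD hab hderiv hdgcont
    have hcmp : ∀ t ∈ Ioo a b, (dg t)^2 ≤ ‖gradient v (γ t)‖^2 := by
      intro t ht
      have hle : |dg t| ≤ ‖fderiv ℝ v (γ t)‖ := by
        have h2 := (fderiv ℝ v (γ t)).le_opNorm u
        rw [hu, mul_one] at h2
        rw [← Real.norm_eq_abs]
        exact h2
      calc (dg t)^2 = |dg t|^2 := (sq_abs _).symm
        _ ≤ ‖fderiv ℝ v (γ t)‖^2 := pow_le_pow_left₀ (abs_nonneg _) hle 2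
        _ = ‖gradient v (γ t)‖^2 := by rw [hgradnorm]
    have hdgint : IntegrableOn (fun t => (dg t)^2) (Ioo a b) volume :=
      ((hdgcont.pow 2).integrableOn_compact isCompact_Icc).mono_set Ioo_subset_Icc_self
    have hgint : IntegrableOn (fun t => ‖gradient v (γ t)‖^2) (Ioo a b) volume :=
      (((hgrad2cont.comp hγcont.continuousOn hγU)).integrableOn_compact
        isCompact_Icc).mono_set Ioo_subset_Icc_self
    have hmono : ∫ t in Ioo a b, (dg t)^2 ≤ ∫ t in Ioo a b, ‖gradient v (γ t)‖^2 :=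
      setIntegral_mono_on hdgint hgint measurableSet_Ioo hcmp
    rw [hfibT x hx, hfibTG x hx]
    have hgb : v (γ b) = v (gr d F h x) := rfl
    have hba : b - a = 2*h := by rw [ha, hb]; ring
    have hc4 : (0:ℝ) ≤ 4*(b-a)^2 := by positivity
    calc ∫ t in Ioo a b, (v (γ t))^2
        ≤ 2*(b-a)*(v (γ b))^2 + 4*(b-a)^2 * ∫ t in Ioo a b, (dg t)^2 := h1d
      _ ≤ 2*(b-a)*(v (γ b))^2 + 4*(b-a)^2 * ∫ t in Ioo a b, ‖gradient v (γ t)‖^2 :=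
          add_le_add_right (mul_le_mul_of_nonneg_left hmono hc4) _
      _ = 4*h*(v (gr d F h x))^2 + 16*h^2 * ∫ t in Ioo a b, ‖gradient v (γ t)‖^2 := by
          rw [hgb, hba]; ring
  -- the boundary integrand
  set Bd : Euc (d-1) → ℝ := B.indicator (fun x => (v (gr d F h x))^2) with hBd
  have hgrB : ∀ x ∈ B, gr d F h x ∈ closure C := fun x hx =>
    fiber_closure hh hx (⟨by linarith, le_rfl⟩ : F x + h ∈ Icc (F x - h) (F x + h))
  have hBdint : Integrable Bd volume := by
    rw [hBd, integrable_indicator_iff measurableSet_ball]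
    have hmaps : MapsTo (gr d F h) (closure B) U := by
      intro x hxc
      have h1 : gr d F h x ∈ closure (gr d F h '' B) :=
        (image_closure_subset_closure_image (gr_continuous d hF)) ⟨x, hxc, rfl⟩
      have h2 := closure_mono (show gr d F h '' B ⊆ closure C by
        rintro p ⟨y, hy, rfl⟩; exact hgrB y hy)
      rw [closure_closure] at h2
      exact hclo (h2 h1)
    have hcont : ContinuousOn (fun x => (v (gr d F h x))^2) (closure B) :=
      (hvcont.comp (gr_continuous d hF).continuousOn hmaps).pow 2
    exact (hcont.integrableOn_compact isBounded_ball.isCompact_closure).mono_set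
      subset_closure
  have hpt : ∀ x, A x ≤ 4*h*Bd x + 16*h^2 * AG x := by
    intro x
    by_cases hx : x ∈ B
    · rw [hBd, indicator_of_mem hx]
      exact hfiber_bound x hx
    · rw [hBd, indicator_of_notMem hx, hfibT0 x hx, mul_zero]
      have : AG x = 0 := hfibTG0 x hx
      rw [this, mul_zero, add_zero]
  -- assemble
  have hAGeq : ∫ x, AG x = ∫ p in C, ‖gradient v p‖^2 ∂(lebPt d) := by
    rw [setIntegral_lebPt (fun p => ‖gradient v p‖^2)]
    rw [← integral_indicator hSmeas]
    rw [hvol, integral_prod _ hTGint']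
  calc ∫ p in C, (v p)^2 ∂(lebPt d)
      = ∫ q in S, (v ((eM d).symm q))^2 := setIntegral_lebPt (fun p => (v p)^2)
    _ = ∫ q, T q ∂volume := (integral_indicator hSmeas).symm
    _ = ∫ x, A x := by rw [hvol, integral_prod _ hTint']
    _ ≤ ∫ x, (4*h*Bd x + 16*h^2 * AG x) :=
        integral_mono hAint ((hBdint.const_mul _).add (hAGint.const_mul _)) hpt
    _ = 4*h*(∫ x, Bd x) + 16*h^2 * ∫ x, AG x := by
        rw [integral_add (hBdint.const_mul _) (hAGint.const_mul _),
          integral_const_mul, integral_const_mul]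
    _ = 4*h*(∫ x in B, (v (gr d F h x))^2)
        + 16*h^2 * ∫ p in C, ‖gradient v p‖^2 ∂(lebPt d) := by
        rw [hBd, integral_indicator measurableSet_ball, hAGeq]

end


/-- Poincaré-type inequality on curved Lipschitz cylinders: for an open
ball `B ⊆ ℝ^{d-1}` and a `Λ`-Lipschitz `f : B → ℝ` there is `C > 0`, depending only on
`B`, `Λ` and `d`, such that for every `h > 0` and every `v` of class `C¹` on a
neighborhood of the closure of `C_h`,
`C ∫_{C_h} v² ≤ h² ∫_{C_h} |∇v|² + h ∫_{Γ_h} v² d𝓗^{d-1}`. -/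
theorem poincare_curved_cylinder
    (d : ℕ) (hd : 2 ≤ d) (x₀ : Euc (d - 1)) (ρ : ℝ) (hρ : 0 < ρ)
    (Λ : ℝ) (hΛ : 0 ≤ Λ) (f : Euc (d - 1) → ℝ)
    (hf : LipschitzOnWith Λ.toNNReal f (Metric.ball x₀ ρ)) :
    ∃ C > 0, ∀ h : ℝ, 0 < h → ∀ v : Pt d → ℝ,
      (∃ U : Set (Pt d), IsOpen U ∧ closure (curvedCyl d f x₀ ρ h) ⊆ U ∧
        ContDiffOn ℝ 1 v U) →
      C * ∫ p in curvedCyl d f x₀ ρ h, (v p) ^ 2 ∂(lebPt d) ≤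
        h ^ 2 * ∫ p in curvedCyl d f x₀ ρ h, ‖gradient v p‖ ^ 2 ∂(lebPt d)
          + h * ∫ p in upperGraph d f x₀ ρ h, (v p) ^ 2 ∂(μH[(d : ℝ) - 1]) := by
  obtain ⟨F, hFlip, hFf⟩ := hf.extend_real
  refine ⟨1/16, by norm_num, ?_⟩
  rintro h hh v ⟨U, hU, hclo, hv⟩
  have hCeq : curvedCyl d f x₀ ρ h = curvedCyl d F x₀ ρ h := by
    unfold curvedCyl
    ext p
    simp only [mem_setOf_eq]
    constructor
    · rintro ⟨h1, h2⟩; exact ⟨h1, by rwa [← hFf h1]⟩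
    · rintro ⟨h1, h2⟩; exact ⟨h1, by rwa [hFf h1]⟩
  have hΓeq : upperGraph d f x₀ ρ h = gr d F h '' Metric.ball x₀ ρ := by
    unfold upperGraph
    apply image_congr
    intro x hx
    rw [hFf hx]
    rfl
  have hκ : ((d-1:ℕ):ℝ) = (d:ℝ)-1 := by
    rw [Nat.cast_sub (by omega : 1 ≤ d), Nat.cast_one]
  rw [hCeq] at hclo ⊢
  rw [hΓeq, ← hκ]
  have hpart1 := partI d hd hh hFlip v U hU hclo hv
  have hΓsub : gr d F h '' Metric.ball x₀ ρ ⊆ closure (curvedCyl d F x₀ ρ h) := by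
    rintro p ⟨x, hx, rfl⟩
    exact fiber_closure hh hx ⟨by linarith, le_rfl⟩
  have hΓU : gr d F h '' Metric.ball x₀ ρ ⊆ U := fun p hp => hclo (hΓsub hp)
  have hvΓ : ContinuousOn v (gr d F h '' Metric.ball x₀ ρ) := hv.continuousOn.mono hΓU
  have hcomp : IsCompact (closure (curvedCyl d F x₀ ρ h)) :=
    (curved_bounded hFlip).isCompact_closure
  obtain ⟨M0, hM0⟩ := hcomp.exists_bound_of_continuousOn (hv.continuousOn.mono hclo)
  have hM : ∀ p ∈ gr d F h '' Metric.ball x₀ ρ, (v p)^2 ≤ M0^2 := by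
    intro p hp
    have h1 : ‖v p‖ ≤ M0 := hM0 p (hΓsub hp)
    rw [Real.norm_eq_abs] at h1
    calc (v p)^2 = |v p|^2 := (sq_abs _).symm
      _ ≤ M0^2 := pow_le_pow_left₀ (abs_nonneg _) h1 2
  have hpart2 := partII d hd x₀ ρ hFlip v (M0^2) hvΓ hM
  set L := ∫ p in curvedCyl d F x₀ ρ h, (v p)^2 ∂(lebPt d) with hL
  set G := ∫ p in curvedCyl d F x₀ ρ h, ‖gradient v p‖^2 ∂(lebPt d) with hG
  set Γint := ∫ p in gr d F h '' Metric.ball x₀ ρ, (v p)^2 ∂(μH[((d-1:ℕ):ℝ)]) with hΓi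
  set Bint := ∫ x in Metric.ball x₀ ρ, (v (gr d F h x))^2 with hBi
  have hΓnn : 0 ≤ Γint := integral_nonneg fun p => sq_nonneg _
  have e1 : 4*h*Bint ≤ 4*h*Γint :=
    mul_le_mul_of_nonneg_left hpart2 (by positivity)
  have e2 : L ≤ 4*h*Γint + 16*h^2*G := by linarith [hpart1, e1]
  have e3 : (1/16)*L ≤ (1/16)*(4*h*Γint + 16*h^2*G) :=
    mul_le_mul_of_nonneg_left e2 (by norm_num)
  have e4 : (1/16)*(4*h*Γint + 16*h^2*G) = (h/4)*Γint + h^2*G := by ring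
  have e5 : (h/4)*Γint ≤ h*Γint := mul_le_mul_of_nonneg_right (by linarith) hΓnn
  linarith
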